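/- For every s ≥ 1 and d ≥ 1 there exists a degree-d multilinear polynomial q over {−1,1}-valued inputs with exactly 4^{d−1}·s nonzero coefficients such that q(U^{⊗n}) (U uniform on {−1,1}) has the same distribution as p(U^{⊗s}) for the s-sparse polynomial p(x) = x₁ + … + x_s. -/

import Mathlib

open scoped Classical

/-- Evaluation of a multilinear polynomial given by its coefficients on subsets of `Fin n`. -/
noncomputable def mlEval {n : ℕ} (coeff : Finset (Fin n) → ℝ) (x : Fin n → ℝ) : ℝ :=
  ∑ S : Finset (Fin n), coeff S * ∏ i ∈ S, x i

/-- The ±1 point of the hypercube corresponding to a Boolean vector. -/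
noncomputable def pmPoint {n : ℕ} (b : Fin n → Bool) : Fin n → ℝ :=
  fun i => if b i then 1 else -1

set_option linter.unusedSectionVars false
set_option maxHeartbeats 1000000

def TreeT : ℕ → Type
  | 0 => PUnit
  | k+1 => Unit ⊕ TreeT k ⊕ TreeT k

instance treeFintype : ∀ k, Fintype (TreeT k)
  | 0 => inferInstanceAs (Fintype PUnit)
  | k+1 => letI := treeFintype k; inferInstanceAs (Fintype (Unit ⊕ TreeT k ⊕ TreeT k))

instance treeDecEq : ∀ k, DecidableEq (TreeT k)
  | 0 => inferInstanceAs (DecidableEq PUnit)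
  | k+1 => letI := treeDecEq k; inferInstanceAs (DecidableEq (Unit ⊕ TreeT k ⊕ TreeT k))

noncomputable def mEv {α : Type} [Fintype α] (coeff : Finset α → ℝ) (x : α → ℝ) : ℝ :=
  ∑ S : Finset α, coeff S * ∏ i ∈ S, x i

noncomputable def pmP {α : Type} (b : α → Bool) : α → ℝ := fun i => if b i then 1 else -1

section comb
variable {α β ι : Type} [Fintype α] [DecidableEq α] [Fintype β] [DecidableEq β] [Fintype ι]

noncomputable def comb (ε : ι → ℝ) (F : ι → Finset α → Finset β) (coeff : Finset α → ℝ) :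
    Finset β → ℝ :=
  fun S => ∑ p : ι × Finset α, if S = F p.1 p.2 then ε p.1 * coeff p.2 else 0

lemma comb_eval (ε : ι → ℝ) (F : ι → Finset α → Finset β) (coeff : Finset α → ℝ) (x : β → ℝ) :
    mEv (comb ε F coeff) x = ∑ i : ι, ε i * ∑ T : Finset α, coeff T * ∏ p ∈ F i T, x p := by
  unfold mEv comb
  simp only [Finset.sum_mul, ite_mul, zero_mul]
  rw [Finset.sum_comm]
  simp only [Finset.sum_ite_eq', Finset.mem_univ, if_true]
  rw [Fintype.sum_prod_type]
  simp [Finset.mul_sum, mul_assoc]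

variable {ε : ι → ℝ} {F : ι → Finset α → Finset β} {coeff : Finset α → ℝ}

lemma comb_apply_eq (h0 : coeff ∅ = 0)
    (hinj : ∀ i T i' T', T ≠ ∅ → T' ≠ ∅ → F i T = F i' T' → i = i' ∧ T = T')
    {i₀ : ι} {T₀ : Finset α} (hT₀ : coeff T₀ ≠ 0) :
    comb ε F coeff (F i₀ T₀) = ε i₀ * coeff T₀ := by
  unfold comb
  rw [Finset.sum_eq_single (i₀, T₀)]
  · simp
  · rintro ⟨i, T⟩ - hne
    by_cases hc : coeff T = 0
    · simp [hc]
    · rw [if_neg]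
      intro h
      have hT : T ≠ ∅ := fun h' => hc (h' ▸ h0)
      have hT0 : T₀ ≠ ∅ := fun h' => hT₀ (h' ▸ h0)
      obtain ⟨h1, h2⟩ := hinj i₀ T₀ i T hT0 hT h
      exact hne (by simp [h1, h2])
  · intro h; exact absurd (Finset.mem_univ _) h

lemma comb_apply_ne {S : Finset β} (h : ∀ i T, coeff T ≠ 0 → S ≠ F i T) :
    comb ε F coeff S = 0 := by
  unfold comb
  apply Finset.sum_eq_zero
  rintro ⟨i, T⟩ -
  by_cases hc : coeff T = 0
  · simp [hc]
  · rw [if_neg (h i T hc)]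

lemma comb_support (hε : ∀ i, ε i ≠ 0) (h0 : coeff ∅ = 0)
    (hinj : ∀ i T i' T', T ≠ ∅ → T' ≠ ∅ → F i T = F i' T' → i = i' ∧ T = T') :
    {S | comb ε F coeff S ≠ 0} =
      (fun p : ι × Finset α => F p.1 p.2) '' {p | coeff p.2 ≠ 0} := by
  ext S
  simp only [Set.mem_setOf_eq, Set.mem_image, Prod.exists]
  constructor
  · intro h
    by_contra hcon
    push_neg at hcon
    exact h (comb_apply_ne (fun i T hc hS => (hcon i T hc) hS.symm))
  · rintro ⟨i, T, hT, rfl⟩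
    rw [comb_apply_eq h0 hinj hT]
    exact mul_ne_zero (hε i) hT

lemma comb_support_ncard (hε : ∀ i, ε i ≠ 0) (h0 : coeff ∅ = 0)
    (hinj : ∀ i T i' T', T ≠ ∅ → T' ≠ ∅ → F i T = F i' T' → i = i' ∧ T = T') :
    {S | comb ε F coeff S ≠ 0}.ncard = Fintype.card ι * {T | coeff T ≠ 0}.ncard := by
  rw [comb_support hε h0 hinj]
  rw [Set.ncard_image_of_injOn]
  · have he : {p : ι × Finset α | coeff p.2 ≠ 0} = (Set.univ : Set ι) ×ˢ {T | coeff T ≠ 0} := by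
      ext ⟨i, T⟩; simp
    rw [he, ← Nat.card_coe_set_eq, Nat.card_congr (Equiv.Set.prod _ _), Nat.card_prod,
      Nat.card_coe_set_eq, Nat.card_coe_set_eq, Set.ncard_univ, Nat.card_eq_fintype_card]
  · rintro ⟨i, T⟩ hT ⟨i', T'⟩ hT' h
    have h1 : T ≠ ∅ := fun h' => hT (h' ▸ h0)
    have h2 : T' ≠ ∅ := fun h' => hT' (h' ▸ h0)
    obtain ⟨ha, hb⟩ := hinj i T i' T' h1 h2 h
    simp [ha, hb]

end comb

section step
variable {α : Type} [Fintype α] [DecidableEq α]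

def embL : α ↪ Unit ⊕ α ⊕ α := ⟨Sum.inr ∘ Sum.inl, fun a b h => by simpa using h⟩
def embR : α ↪ Unit ⊕ α ⊕ α := ⟨Sum.inr ∘ Sum.inr, fun a b h => by simpa using h⟩

noncomputable def stepF : Bool × Bool → Finset α → Finset (Unit ⊕ α ⊕ α) :=
  fun p T =>
    let M := T.map (if p.1 then embR else embL)
    if p.2 then insert (Sum.inl ()) M else M

noncomputable def stepε : Bool × Bool → ℝ := fun p => if p.1 && p.2 then -(1/2) else 1/2

lemma root_not_mem_map (T : Finset α) (e : α ↪ Unit ⊕ α ⊕ α)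
    (he : ∀ a, ∃ c, e a = Sum.inr c) : (Sum.inl () : Unit ⊕ α ⊕ α) ∉ T.map e := by
  simp only [Finset.mem_map, not_exists]
  rintro a ⟨ha, h⟩
  obtain ⟨c, hc⟩ := he a
  rw [hc] at h
  exact absurd h (by simp)

lemma stepF_inj : ∀ (i : Bool × Bool) (T : Finset α) (i' : Bool × Bool) (T' : Finset α),
    T ≠ ∅ → T' ≠ ∅ → stepF i T = stepF i' T' → i = i' ∧ T = T' := by
  rintro ⟨s₁, w₁⟩ T ⟨s₂, w₂⟩ T' hT hT' h
  have hroot : ∀ (s : Bool) (U : Finset α),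
      (Sum.inl () : Unit ⊕ α ⊕ α) ∉ U.map (if s then embR else embL) := by
    intro s U
    apply root_not_mem_map
    intro a; cases s <;> exact ⟨_, rfl⟩
  unfold stepF at h
  have hw : w₁ = w₂ := by
    by_contra hne
    cases w₁ <;> cases w₂
    · exact hne rfl
    · simp only [if_true, if_false, Bool.false_eq_true] at h
      have : (Sum.inl () : Unit ⊕ α ⊕ α) ∈ T.map (if s₁ then embR else embL) := by
        rw [h]; exact Finset.mem_insert_self _ _
      exact hroot _ _ this
    · simp only [if_true, if_false, Bool.false_eq_true] at h
      have : (Sum.inl () : Unit ⊕ α ⊕ α) ∈ T'.map (if s₂ then embR else embL) := by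
        rw [← h]; exact Finset.mem_insert_self _ _
      exact hroot _ _ this
    · exact hne rfl
  subst hw
  have hM : T.map (if s₁ then embR else embL) = T'.map (if s₂ then embR else embL) := by
    cases w₁ <;> simp only [if_true, if_false, Bool.false_eq_true] at h
    · exact h
    · have := congrArg (fun U => Finset.erase U (Sum.inl ())) h
      simpa [Finset.erase_insert (hroot s₁ T), Finset.erase_insert (hroot s₂ T')] using this
  have hs : s₁ = s₂ := by
    obtain ⟨t, ht⟩ := Finset.nonempty_iff_ne_empty.2 hT
    have h1 : (if s₁ then embR else embL) t ∈ T'.map (if s₂ then embR else embL) := by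
      rw [← hM]; exact Finset.mem_map_of_mem _ ht
    obtain ⟨t', -, ht'⟩ := Finset.mem_map.1 h1
    by_contra hne
    cases s₁ <;> cases s₂ <;> simp_all [embL, embR] <;> exact absurd (Sum.inr.inj ht') (by simp)
  subst hs
  exact ⟨rfl, Finset.map_injective _ hM⟩

lemma prod_stepF (p : Bool × Bool) (T : Finset α) (x : Unit ⊕ α ⊕ α → ℝ) :
    ∏ q ∈ stepF p T, x q =
      (if p.2 then x (Sum.inl ()) else 1) * ∏ t ∈ T, x ((if p.1 then embR else embL) t) := by
  unfold stepF
  have hroot : (Sum.inl () : Unit ⊕ α ⊕ α) ∉ T.map (if p.1 then embR else embL) := by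
    apply root_not_mem_map; intro a; cases p.1 <;> exact ⟨_, rfl⟩
  cases hp : p.2
  · simp [Finset.prod_map]
  · simp [Finset.prod_insert hroot, Finset.prod_map]

lemma step_eval (coeff : Finset α → ℝ) (x : Unit ⊕ α ⊕ α → ℝ) :
    mEv (comb stepε stepF coeff) x =
      (1/2) * (1 + x (Sum.inl ())) * mEv coeff (x ∘ embL)
      + (1/2) * (1 - x (Sum.inl ())) * mEv coeff (x ∘ embR) := by
  rw [comb_eval]
  rw [Fintype.sum_prod_type]
  simp only [Fintype.sum_bool]
  simp only [prod_stepF, stepε]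
  simp only [Bool.and_true, Bool.and_false, if_true, if_false]
  unfold mEv
  simp only [Finset.mul_sum, Function.comp, Bool.false_eq_true, if_false]
  rw [← Finset.sum_add_distrib, ← Finset.sum_add_distrib, ← Finset.sum_add_distrib, ← Finset.sum_add_distrib]
  apply Finset.sum_congr rfl
  intro T _
  ring

lemma stepε_ne (i : Bool × Bool) : stepε i ≠ 0 := by
  obtain ⟨a, b⟩ := i; cases a <;> cases b <;> norm_num [stepε]

lemma stepF_nonempty (p : Bool × Bool) (T : Finset α) (hT : T ≠ ∅) : stepF p T ≠ ∅ := by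
  unfold stepF
  cases hp : p.2 <;> simp [hT, Finset.map_eq_empty]

lemma stepF_card (p : Bool × Bool) (T : Finset α) : (stepF p T).card ≤ T.card + 1 := by
  unfold stepF
  cases hp : p.2 <;> simp only [if_true, if_false, Bool.false_eq_true]
  · rw [Finset.card_map]; omega
  · calc (insert (Sum.inl ()) (T.map _)).card ≤ (T.map _).card + 1 := Finset.card_insert_le _ _
      _ = T.card + 1 := by rw [Finset.card_map]

end step

structure TreeData (k : ℕ) where
  α : Type
  [fin : Fintype α]
  [deq : DecidableEq α]
  coeff : Finset α → ℝ
  h0 : coeff ∅ = 0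
  hdeg : ∀ S : Finset α, k + 1 < S.card → coeff S = 0
  hcard : {S : Finset α | coeff S ≠ 0}.ncard = 4 ^ k
  hpm : ∀ b : α → Bool, mEv coeff (pmP b) = 1 ∨ mEv coeff (pmP b) = -1

attribute [instance] TreeData.fin TreeData.deq

lemma treeData_exists : ∀ k, Nonempty (TreeData k) := by
  intro k
  induction k with
  | zero =>
    refine ⟨⟨PUnit, fun S => if S = {PUnit.unit} then 1 else 0, ?_, ?_, ?_, ?_⟩⟩
    · have h : (∅ : Finset PUnit) ≠ {PUnit.unit} := (Finset.singleton_ne_empty _).symm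
      show (if (∅ : Finset PUnit) = {PUnit.unit} then (1:ℝ) else 0) = 0
      exact if_neg h
    · intro S hS
      have h : S ≠ {PUnit.unit} := by intro h; rw [h] at hS; simp at hS
      show (if S = {PUnit.unit} then (1:ℝ) else 0) = 0
      exact if_neg h
    · have : {S : Finset PUnit | (if S = {PUnit.unit} then (1:ℝ) else 0) ≠ 0} = {({PUnit.unit} : Finset PUnit)} := by
        ext S; by_cases h : S = {PUnit.unit} <;> simp [h]
      rw [this, Set.ncard_singleton, pow_zero]
    · intro b
      have : mEv (fun S => if S = {PUnit.unit} then (1:ℝ) else 0) (pmP b) = pmP b PUnit.unit := by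
        unfold mEv
        simp only [ite_mul, zero_mul, one_mul, Finset.sum_ite_eq', Finset.mem_univ, if_true]
        simp
      rw [this]
      unfold pmP
      cases b PUnit.unit <;> simp
  | succ k ih =>
    obtain ⟨D⟩ := ih
    refine ⟨⟨Unit ⊕ D.α ⊕ D.α, comb stepε stepF D.coeff, ?_, ?_, ?_, ?_⟩⟩
    · apply comb_apply_ne
      intro i T hT hS
      exact stepF_nonempty i T (fun h => hT (h ▸ D.h0)) hS.symm
    · intro S hS
      by_contra hne
      have hsupp := comb_support stepε_ne D.h0 stepF_inj (coeff := D.coeff)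
      have : S ∈ {S | comb stepε stepF D.coeff S ≠ 0} := hne
      rw [hsupp] at this
      obtain ⟨⟨i, T⟩, hT, rfl⟩ := this
      have hS' : k + 1 + 1 < (stepF i T).card := hS
      have h1 : T.card ≤ k + 1 := by
        by_contra hc
        exact hT (D.hdeg T (by omega))
      have h2 := stepF_card i T
      omega
    · rw [comb_support_ncard stepε_ne D.h0 stepF_inj, D.hcard]
      have : Fintype.card (Bool × Bool) = 4 := by simp
      rw [this, pow_succ]
      ring
    · intro b
      rw [step_eval]
      have hL : pmP b ∘ ⇑(embL (α := D.α)) = pmP (b ∘ ⇑(embL (α := D.α))) := rfl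
      have hR : pmP b ∘ ⇑(embR (α := D.α)) = pmP (b ∘ ⇑(embR (α := D.α))) := rfl
      rw [hL, hR]
      cases hb : b (Sum.inl ()) <;> simp only [pmP, hb, if_true, if_false, Bool.false_eq_true]
      · rcases D.hpm (b ∘ ⇑(embR (α := D.α))) with h | h <;> rw [h] <;> [left; right] <;> ring
      · rcases D.hpm (b ∘ ⇑(embL (α := D.α))) with h | h <;> rw [h] <;> [left; right] <;> ring

section combine
variable {τ : Type} [Fintype τ] [DecidableEq τ] {s : ℕ}

def embB (s : ℕ) (j : Fin s) : τ ↪ Fin s × τ :=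
  ⟨fun i => (j, i), fun a b h => by simpa using h⟩

noncomputable def combF (s : ℕ) : Fin s → Finset τ → Finset (Fin s × τ) :=
  fun j T => T.map (embB s j)

lemma combF_inj : ∀ (j : Fin s) (T : Finset τ) (j' : Fin s) (T' : Finset τ),
    T ≠ ∅ → T' ≠ ∅ → combF s j T = combF s j' T' → j = j' ∧ T = T' := by
  intro j T j' T' hT hT' h
  obtain ⟨t, ht⟩ := Finset.nonempty_iff_ne_empty.2 hT
  have h1 : (embB s j) t ∈ combF s j' T' := by
    rw [← h]; exact Finset.mem_map_of_mem _ ht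
  obtain ⟨t', -, ht'⟩ := Finset.mem_map.1 h1
  have hj : j = j' := congrArg Prod.fst ht'.symm
  subst hj
  exact ⟨rfl, Finset.map_injective _ h⟩

lemma combine_eval (coeff : Finset τ → ℝ) (x : Fin s × τ → ℝ) :
    mEv (comb (fun _ => (1 : ℝ)) (combF s) coeff) x
      = ∑ j : Fin s, mEv coeff (fun i => x (j, i)) := by
  rw [comb_eval]
  apply Finset.sum_congr rfl
  intro j _
  rw [one_mul]
  unfold mEv combF
  apply Finset.sum_congr rfl
  intro T _
  rw [Finset.prod_map]
  rfl

/-- Sum of a nonempty monomial over the hypercube vanishes. -/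
lemma sum_pm_prod (S : Finset τ) (hS : S ≠ ∅) :
    ∑ b : τ → Bool, ∏ i ∈ S, pmP b i = 0 := by
  obtain ⟨i₀, hi₀⟩ := Finset.nonempty_iff_ne_empty.2 hS
  apply Finset.sum_ninvolution (fun b => Function.update b i₀ (! b i₀))
  · intro b
    rw [← Finset.mul_prod_erase S _ hi₀, ← Finset.mul_prod_erase S _ hi₀]
    have h1 : ∀ i ∈ S.erase i₀, pmP (Function.update b i₀ (! b i₀)) i = pmP b i := by
      intro i hi
      have : i ≠ i₀ := Finset.ne_of_mem_erase hi
      simp [pmP, Function.update_of_ne this]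
    rw [Finset.prod_congr rfl h1]
    have h2 : pmP (Function.update b i₀ (! b i₀)) i₀ = - pmP b i₀ := by
      simp only [pmP, Function.update_self]
      cases b i₀ <;> norm_num
    rw [h2]; ring
  · intro b _ h
    have := congrFun h i₀
    simp at this
  · intro b; exact Finset.mem_univ _
  · intro b
    funext i
    by_cases hi : i = i₀
    · subst hi; simp
    · simp [Function.update_of_ne hi]

lemma balance {coeff : Finset τ → ℝ} (h0 : coeff ∅ = 0)
    (hpm : ∀ b : τ → Bool, mEv coeff (pmP b) = 1 ∨ mEv coeff (pmP b) = -1) :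
    (Finset.univ.filter fun b : τ → Bool => mEv coeff (pmP b) = 1).card * 2
      = Fintype.card (τ → Bool) := by
  have hsum : ∑ b : τ → Bool, mEv coeff (pmP b) = 0 := by
    unfold mEv
    rw [Finset.sum_comm]
    apply Finset.sum_eq_zero
    intro S _
    by_cases hS : S = ∅
    · subst hS; simp [h0]
    · rw [← Finset.mul_sum, sum_pm_prod S hS, mul_zero]
  set A := Finset.univ.filter fun b : τ → Bool => mEv coeff (pmP b) = 1 with hA
  have hsplit := Finset.sum_filter_add_sum_filter_not Finset.univ
    (fun b : τ → Bool => mEv coeff (pmP b) = 1) (fun b => mEv coeff (pmP b))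
  have h1 : ∑ b ∈ A, mEv coeff (pmP b) = (A.card : ℝ) := by
    rw [Finset.sum_congr rfl (fun b hb => (Finset.mem_filter.1 hb).2)]
    simp
    rfl
  have h2 : ∑ b ∈ Finset.univ.filter (fun b : τ → Bool => ¬ mEv coeff (pmP b) = 1),
      mEv coeff (pmP b)
      = -((Finset.univ.filter (fun b : τ → Bool => ¬ mEv coeff (pmP b) = 1)).card : ℝ) := by
    have hval : ∀ b ∈ Finset.univ.filter (fun b : τ → Bool => ¬ mEv coeff (pmP b) = 1),
        mEv coeff (pmP b) = -1 := by
      intro b hb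
      have hb2 := (Finset.mem_filter.1 hb).2
      rcases hpm b with h | h
      · exact absurd h hb2
      · exact h
    rw [Finset.sum_congr rfl hval]
    simp
  rw [h1, h2, hsum] at hsplit
  have hcards := Finset.card_filter_add_card_filter_not
    (s := (Finset.univ : Finset (τ → Bool))) (p := fun b => mEv coeff (pmP b) = 1)
  have heq : A.card = (Finset.univ.filter (fun b : τ → Bool => ¬ mEv coeff (pmP b) = 1)).card := by
    have h3 : (A.card : ℝ)
        = ((Finset.univ.filter (fun b : τ → Bool => ¬ mEv coeff (pmP b) = 1)).card : ℝ) := by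
      linarith
    exact_mod_cast h3
  rw [Finset.card_univ] at hcards
  rw [← hA] at hcards
  omega

end combine

section counting
variable {τ : Type} [Fintype τ] [DecidableEq τ] {s : ℕ}

lemma count_sum (g : (τ → Bool) → ℝ) (hg : ∀ c, g c = 1 ∨ g c = -1) (N : ℕ)
    (hN1 : (Finset.univ.filter fun x : τ → Bool => g x = 1).card = N)
    (hN2 : (Finset.univ.filter fun x : τ → Bool => ¬ g x = 1).card = N) (v : ℝ) :
    (Finset.univ.filter fun h : Fin s → (τ → Bool) => (∑ j, g (h j)) = v).card
      = N ^ s * (Finset.univ.filter fun c : Fin s → Bool =>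
          (∑ j, (if c j then (1 : ℝ) else -1)) = v).card := by
  set φ : (Fin s → (τ → Bool)) → (Fin s → Bool) :=
    fun h j => if g (h j) = 1 then true else false with hφ
  have key : ∀ h : Fin s → (τ → Bool), (∑ j, g (h j)) = ∑ j, (if φ h j then (1 : ℝ) else -1) := by
    intro h
    apply Finset.sum_congr rfl
    intro j _
    rcases hg (h j) with h1 | h1 <;> norm_num [hφ, h1]
  rw [Finset.card_eq_sum_card_fiberwise (f := φ)
    (t := Finset.univ.filter fun c : Fin s → Bool => (∑ j, (if c j then (1 : ℝ) else -1)) = v)]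
  · have hfib : ∀ c ∈ (Finset.univ.filter fun c : Fin s → Bool =>
        (∑ j, (if c j then (1 : ℝ) else -1)) = v),
        ((Finset.univ.filter fun h : Fin s → (τ → Bool) => (∑ j, g (h j)) = v).filter
          fun h => φ h = c).card = N ^ s := by
      intro c hc
      have hc2 := (Finset.mem_filter.1 hc).2
      have hset : ((Finset.univ.filter fun h : Fin s → (τ → Bool) => (∑ j, g (h j)) = v).filter
          fun h => φ h = c) = Finset.univ.filter (fun h : Fin s → (τ → Bool) => φ h = c) := by
        ext h
        simp only [Finset.mem_filter, Finset.mem_univ, true_and]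
        constructor
        · rintro ⟨-, h2⟩; exact h2
        · intro h2
          refine ⟨?_, h2⟩
          rw [key h, h2]; exact hc2
      rw [hset]
      have hpi : Finset.univ.filter (fun h : Fin s → (τ → Bool) => φ h = c)
          = Fintype.piFinset (fun j => Finset.univ.filter fun x : τ → Bool =>
              (if g x = 1 then true else false) = c j) := by
        ext h
        simp only [Finset.mem_filter, Finset.mem_univ, true_and, Fintype.mem_piFinset, hφ,
          funext_iff]
      rw [hpi, Fintype.card_piFinset]
      have hfac : ∀ j : Fin s, (Finset.univ.filter fun x : τ → Bool =>
          (if g x = 1 then true else false) = c j).card = N := by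
        intro j
        cases hcj : c j
        · rw [← hN2]
          congr 1
          ext x
          by_cases hx : g x = 1 <;> simp [hx]
        · rw [← hN1]
          congr 1
          ext x
          by_cases hx : g x = 1 <;> simp [hx]
      rw [Finset.prod_congr rfl (fun j _ => hfac j)]
      simp
    rw [Finset.sum_congr rfl hfib, Finset.sum_const, smul_eq_mul, mul_comm]
  · intro h hh
    simp only [Finset.mem_coe, Finset.mem_filter, Finset.mem_univ, true_and] at hh ⊢
    rw [← key h]; exact hh

end counting

theorem stmt18 (s d : ℕ) (hs : 1 ≤ s) (hd : 1 ≤ d) :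
    ∃ (n : ℕ) (q : Finset (Fin n) → ℝ),
      (∀ S : Finset (Fin n), d < S.card → q S = 0) ∧
      {S : Finset (Fin n) | q S ≠ 0}.ncard = 4 ^ (d - 1) * s ∧
      ∀ v : ℝ,
        2 ^ s * (Finset.univ.filter fun b : Fin n → Bool =>
            mlEval q (pmPoint b) = v).card =
        2 ^ n * (Finset.univ.filter fun b : Fin s → Bool =>
            (∑ i : Fin s, (if b i then (1 : ℝ) else -1)) = v).card := by
  obtain ⟨k, rfl⟩ : ∃ k, d = k + 1 := ⟨d - 1, (Nat.succ_pred_eq_of_pos hd).symm⟩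
  obtain ⟨D⟩ := treeData_exists k
  set τ := D.α
  set Q : Finset (Fin s × τ) → ℝ := comb (fun _ => (1 : ℝ)) (combF s) D.coeff with hQ
  set n := Fintype.card (Fin s × τ) with hn
  set e : Fin n ≃ Fin s × τ := (Fintype.equivFin (Fin s × τ)).symm with he
  have hε : ∀ _ : Fin s, (1 : ℝ) ≠ 0 := fun _ => one_ne_zero
  have hQsupp : {U | Q U ≠ 0} =
      (fun p : Fin s × Finset τ => combF s p.1 p.2) '' {p | D.coeff p.2 ≠ 0} :=
    comb_support hε D.h0 combF_inj
  have hQdeg : ∀ U : Finset (Fin s × τ), k + 1 < U.card → Q U = 0 := by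
    intro U hU
    by_contra hne
    have : U ∈ {U | Q U ≠ 0} := hne
    rw [hQsupp] at this
    obtain ⟨⟨j, T⟩, hT, rfl⟩ := this
    have hcard : ((fun p : Fin s × Finset τ => combF s p.1 p.2) (j, T)).card = T.card :=
      Finset.card_map _
    have hTk : T.card ≤ k + 1 := by
      by_contra hc
      exact hT (D.hdeg T (by omega))
    omega
  refine ⟨n, fun S => Q (S.map e.toEmbedding), ?_, ?_, ?_⟩
  · intro S hS
    apply hQdeg
    rw [Finset.card_map]
    exact hS
  · have hset : {S : Finset (Fin n) | Q (S.map e.toEmbedding) ≠ 0}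
        = e.symm.finsetCongr '' {U : Finset (Fin s × τ) | Q U ≠ 0} := by
      ext S
      simp only [Set.mem_setOf_eq, Set.mem_image]
      constructor
      · intro h
        refine ⟨S.map e.toEmbedding, h, ?_⟩
        simp [Equiv.finsetCongr_apply, Finset.map_map]
      · rintro ⟨U, hU, rfl⟩
        simpa [Equiv.finsetCongr_apply, Finset.map_map] using hU
    rw [hset, Set.ncard_image_of_injective _ (Equiv.injective _),
      comb_support_ncard hε D.h0 combF_inj, D.hcard]
    simp [mul_comm]
  · intro v
    -- the per-block function
    set g : (τ → Bool) → ℝ := fun c => mEv D.coeff (pmP c) with hg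
    have hgpm : ∀ c, g c = 1 ∨ g c = -1 := D.hpm
    set N : ℕ := (Finset.univ.filter fun x : τ → Bool => g x = 1).card with hN
    have hbal : N * 2 = Fintype.card (τ → Bool) := balance D.h0 D.hpm
    have hN2 : (Finset.univ.filter fun x : τ → Bool => ¬ g x = 1).card = N := by
      have := Finset.card_filter_add_card_filter_not
        (s := (Finset.univ : Finset (τ → Bool))) (p := fun x => g x = 1)
      rw [Finset.card_univ] at this
      omega
    -- evaluation of the lifted polynomial
    have heval : ∀ b : Fin n → Bool,
        mlEval (fun S => Q (S.map e.toEmbedding)) (pmPoint b)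
          = mEv Q (pmP (fun p => b (e.symm p))) := by
      intro b
      unfold mlEval mEv
      apply Fintype.sum_equiv e.finsetCongr
      intro S
      rw [Equiv.finsetCongr_apply, Finset.prod_map]
      apply congrArg
      apply Finset.prod_congr rfl
      intro i _
      simp [pmP, pmPoint]
    have hQeval : ∀ b' : (Fin s × τ) → Bool,
        mEv Q (pmP b') = ∑ j : Fin s, g (fun i => b' (j, i)) := by
      intro b'
      rw [hQ, combine_eval]
      rfl
    -- chain of card equalities
    have step1 : (Finset.univ.filter fun b : Fin n → Bool =>
          mlEval (fun S => Q (S.map e.toEmbedding)) (pmPoint b) = v).card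
        = (Finset.univ.filter fun b' : (Fin s × τ) → Bool => mEv Q (pmP b') = v).card := by
      apply Finset.card_equiv (Equiv.arrowCongr e (Equiv.refl Bool))
      intro b
      simp only [Finset.mem_filter, Finset.mem_univ, true_and]
      rw [heval b]
      exact Iff.rfl
    have step2 : (Finset.univ.filter fun b' : (Fin s × τ) → Bool => mEv Q (pmP b') = v).card
        = (Finset.univ.filter fun h : Fin s → (τ → Bool) => (∑ j, g (h j)) = v).card := by
      apply Finset.card_equiv (Equiv.curry (Fin s) τ Bool)
      intro b'
      simp only [Finset.mem_filter, Finset.mem_univ, true_and]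
      rw [hQeval b']
      rfl
    rw [step1, step2, count_sum g hgpm N rfl hN2 v]
    have hcardfun : Fintype.card (τ → Bool) = 2 ^ Fintype.card τ := by
      simp [Fintype.card_fun]
    have h2N : 2 * N = 2 ^ Fintype.card τ := by
      rw [mul_comm, hbal]; exact hcardfun
    have hnpow : (2 : ℕ) ^ n = (2 * N) ^ s := by
      rw [h2N, hn, ← pow_mul, Fintype.card_prod, Fintype.card_fin, mul_comm]
    rw [← mul_assoc, hnpow, mul_pow]
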